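/- Let H be a strongly primary monoid and let (a_k)_{k=1}^{∞} be a sequence of elements of H such that lim_{k→∞} max L(a_k) = ∞. Then liminf_{k→∞} ρ(a_k) ≥ ρ(H). -/

import Mathlib

open Filter Topology

/-- The set of factorization lengths of `a`: the set of all `k` such that `a` is a
product of `k` atoms (irreducibles); by convention it is `{0}` for units. -/
noncomputable def lengthSet (H : Type*) [CommMonoid H] (a : H) : Set ℕ :=
  open Classical in
  if IsUnit a then {0}
  else {k | ∃ f : Fin k → H, (∀ i, Irreducible (f i)) ∧ a = ∏ i, f i}

/-- The elasticity `ρ(a) = max L(a) / min L(a)` of an element of a BF-monoid,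
with `ρ(a) = 1` for units. -/
noncomputable def elasticity (H : Type*) [CommMonoid H] (a : H) : ℝ :=
  open Classical in
  if IsUnit a then 1
  else ((sSup (lengthSet H a) : ℕ) : ℝ) / ((sInf (lengthSet H a) : ℕ) : ℝ)

/-- The elasticity `ρ(H) = sup {ρ(a) : a ∈ H} ∈ ℝ≥1 ∪ {∞}` of the monoid `H`. -/
noncomputable def monoidElasticity (H : Type*) [CommMonoid H] : EReal :=
  ⨆ a : H, ((elasticity H a : ℝ) : EReal)

/-- The set `R̄(H)` of asymptotic elasticities `ρ̄(a) = lim_{n → ∞} ρ(aⁿ)`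
of nonunits `a ∈ H` (membership requires the limit to exist). -/
def asympSet (H : Type*) [CommMonoid H] : Set EReal :=
  {r | ∃ a : H, ¬ IsUnit a ∧
    Tendsto (fun n : ℕ => ((elasticity H (a ^ n) : ℝ) : EReal)) atTop (nhds r)}

/-- `H` is locally finitely generated: for every `a ∈ H` there are only finitely many
atoms, up to associates, dividing some power of `a`. -/
def LocallyFinitelyGenerated (H : Type*) [CommMonoid H] : Prop :=
  ∀ a : H, {u : Associates H | Irreducible u ∧ ∃ n : ℕ, u ∣ Associates.mk (a ^ n)}.Finite

/-- `H` is a BF-monoid: atomic (every nonunit has a factorization into atoms) and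
all sets of lengths are finite. -/
def IsBFMonoid (H : Type*) [CommMonoid H] : Prop :=
  (∀ a : H, ¬ IsUnit a → (lengthSet H a).Nonempty) ∧ ∀ a : H, (lengthSet H a).Finite

/-- `(k, ℓ) ≠ (0,0)` is a nice pair with respect to `(a, b)` if
`max L((aᵏbˡ)ᵗ) = t · max L(aᵏbˡ)` and `min L((aᵏbˡ)ᵗ) = t · min L(aᵏbˡ)` for all `t ∈ ℕ`. -/
def IsNicePair (H : Type*) [CommMonoid H] (a b : H) (k ℓ : ℕ) : Prop :=
  ¬ (k = 0 ∧ ℓ = 0) ∧ ∀ t : ℕ, 0 < t →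
    sSup (lengthSet H ((a ^ k * b ^ ℓ) ^ t)) = t * sSup (lengthSet H (a ^ k * b ^ ℓ)) ∧
    sInf (lengthSet H ((a ^ k * b ^ ℓ) ^ t)) = t * sInf (lengthSet H (a ^ k * b ^ ℓ))

/-- `H` is strongly primary: `H ≠ H^×` and for every nonunit `a` there is `n ∈ ℕ`
such that every product of `n` nonunits of `H` is divisible by `a`. -/
def StronglyPrimary (H : Type*) [CommMonoid H] : Prop :=
  (∃ a : H, ¬ IsUnit a) ∧ ∀ a : H, ¬ IsUnit a → ∃ n : ℕ, 0 < n ∧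
    ∀ f : Fin n → H, (∀ i, ¬ IsUnit (f i)) → a ∣ ∏ i, f i

/-- `H` is half-factorial: atomic and `|L(a)| = 1` for every `a ∈ H`. -/
def IsHalfFactorial (H : Type*) [CommMonoid H] : Prop :=
  ∀ a : H, ∃ k : ℕ, lengthSet H a = {k}


section Aux
variable {H : Type*} [CancelCommMonoid H]

lemma list_prod_eq_finprod (l : List H) {n : ℕ} (h : l.length = n) :
    l.prod = ∏ i : Fin n, l.get (Fin.cast h.symm i) := by
  subst h
  rw [← Fin.prod_ofFn]
  congr 1
  exact (List.ofFn_get l).symm ▸ rfl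

lemma mem_lengthSet_iff_list {a : H} (ha : ¬ IsUnit a) {k : ℕ} :
    k ∈ lengthSet H a ↔
      ∃ l : List H, (∀ x ∈ l, Irreducible x) ∧ l.length = k ∧ a = l.prod := by
  classical
  simp only [lengthSet, if_neg ha, Set.mem_setOf_eq]
  constructor
  · rintro ⟨f, hf, rfl⟩
    refine ⟨List.ofFn f, ?_, by simp, (Fin.prod_ofFn f).symm⟩
    intro x hx
    obtain ⟨i, rfl⟩ := List.mem_ofFn.mp hx
    exact hf i
  · rintro ⟨l, hl, rfl, rfl⟩
    exact ⟨l.get, fun i => hl _ (l.get_mem i), list_prod_eq_finprod l rfl⟩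

lemma dvd_listProd {b : H} {n : ℕ}
    (hdvd : ∀ f : Fin n → H, (∀ i, ¬ IsUnit (f i)) → b ∣ ∏ i, f i)
    {l : List H} (hl : ∀ x ∈ l, ¬ IsUnit x) (hlen : n ≤ l.length) :
    b ∣ l.prod := by
  have htake : (l.take n).length = n := by simp [hlen]
  have h1 : b ∣ (l.take n).prod := by
    rw [list_prod_eq_finprod (l.take n) htake]
    exact hdvd _ (fun i => hl _ (List.mem_of_mem_take ((l.take n).get_mem _)))
  calc b ∣ (l.take n).prod := h1
    _ ∣ (l.take n).prod * (l.drop n).prod := dvd_mul_right _ _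
    _ = l.prod := by rw [← List.prod_append, List.take_append_drop]

lemma pow_dvd_listProd {b : H} {n : ℕ}
    (hdvd : ∀ f : Fin n → H, (∀ i, ¬ IsUnit (f i)) → b ∣ ∏ i, f i) :
    ∀ (s : ℕ) (l : List H), (∀ x ∈ l, ¬ IsUnit x) → s * n ≤ l.length →
      b ^ s ∣ l.prod := by
  intro s
  induction s with
  | zero => intro l _ _; simpa using one_dvd _
  | succ s ih =>
      intro l hl hlen
      have hn' : n ≤ l.length := le_trans (by nlinarith) hlen
      have h1 : b ∣ (l.take n).prod :=
        dvd_listProd hdvd (fun x hx => hl x (List.mem_of_mem_take hx)) (by simp [hn'])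
      have h2 : b ^ s ∣ (l.drop n).prod := by
        apply ih _ (fun x hx => hl x (List.mem_of_mem_drop hx))
        have h3 : (l.drop n).length = l.length - n := List.length_drop
        have h4 : (s + 1) * n = s * n + n := by ring
        omega
      have hpow : b ^ (s + 1) = b * b ^ s := by rw [pow_succ, mul_comm]
      rw [hpow, ← List.take_append_drop n l, List.prod_append]
      exact mul_dvd_mul h1 h2

lemma exists_atomic_fact (hsp : StronglyPrimary H) {a : H} (ha : ¬ IsUnit a) :
    ∃ l : List H, (∀ x ∈ l, Irreducible x) ∧ a = l.prod := by
  by_contra hbada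
  set Bad : H → Prop := fun x => ¬ IsUnit x ∧
    ¬ ∃ l : List H, (∀ y ∈ l, Irreducible y) ∧ x = l.prod with hBad
  have hstep : ∀ x, Bad x → ∃ y z, x = y * z ∧ ¬ IsUnit y ∧ Bad z := by
    rintro x ⟨hxu, hxl⟩
    have hxirr : ¬ Irreducible x := by
      intro h
      exact hxl ⟨[x], by simpa using h, by simp⟩
    obtain ⟨y, z, hxyz, hy, hz⟩ : ∃ y z, x = y * z ∧ ¬ IsUnit y ∧ ¬ IsUnit z := by
      simp only [irreducible_iff, not_and, not_forall] at hxirr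
      obtain ⟨y, z, hyz, h⟩ := hxirr hxu
      push_neg at h
      exact ⟨y, z, hyz, h.1, h.2⟩
    by_cases hzb : ∃ l : List H, (∀ y ∈ l, Irreducible y) ∧ z = l.prod
    · by_cases hyb : ∃ l : List H, (∀ y ∈ l, Irreducible y) ∧ y = l.prod
      · obtain ⟨ly, hly, hy'⟩ := hyb
        obtain ⟨lz, hlz, hz'⟩ := hzb
        exact absurd ⟨ly ++ lz, by
          constructor
          · intro u hu
            rcases List.mem_append.mp hu with h | h
            exacts [hly u h, hlz u h]
          · rw [List.prod_append, ← hy', ← hz', hxyz]⟩ hxl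
      · exact ⟨z, y, by rw [hxyz, mul_comm], hz, hy, hyb⟩
    · exact ⟨y, z, hxyz, hy, hz, hzb⟩
  have hchain : ∀ s : ℕ, ∃ (l : List H) (x : H),
      l.length = s ∧ (∀ y ∈ l, ¬ IsUnit y) ∧ Bad x ∧ a = l.prod * x := by
    intro s
    induction s with
    | zero => exact ⟨[], a, rfl, by simp, ⟨ha, hbada⟩, by simp⟩
    | succ s ih =>
        obtain ⟨l, x, hlen, hl, hbx, hax⟩ := ih
        obtain ⟨y, z, hxyz, hy, hbz⟩ := hstep x hbx
        refine ⟨l ++ [y], z, by simp [hlen], ?_, hbz, ?_⟩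
        · intro u hu
          rcases List.mem_append.mp hu with h | h
          · exact hl u h
          · simp only [List.mem_singleton] at h; subst h; exact hy
        · rw [List.prod_append, hax, hxyz]; simp [mul_assoc]
  obtain ⟨n, hn, hdvd⟩ := hsp.2 a ha
  obtain ⟨l, x, hlen, hl, ⟨hxu, -⟩, hax⟩ := hchain n
  have h1 : a ∣ l.prod := dvd_listProd hdvd hl (le_of_eq hlen.symm)
  obtain ⟨d, hd⟩ := h1
  have h2 : a * 1 = a * (d * x) := by
    rw [mul_one]
    calc a = l.prod * x := hax
    _ = a * d * x := by rw [hd]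
    _ = a * (d * x) := mul_assoc _ _ _
  have h3 := mul_left_cancel h2
  exact hxu (IsUnit.of_mul_eq_one (a := x) d (by rw [mul_comm]; exact h3.symm))

lemma isUnit_of_mem_of_isUnit_listProd :
    ∀ (l : List H), IsUnit l.prod → ∀ x ∈ l, IsUnit x := by
  intro l
  induction l with
  | nil => intro _ x hx; simp at hx
  | cons y t ih =>
      intro h x hx
      rw [List.prod_cons] at h
      rcases List.mem_cons.mp hx with rfl | hx
      · exact isUnit_of_mul_isUnit_left h
      · exact ih (isUnit_of_mul_isUnit_right h) x hx

lemma lengthSet_le_const {a : H} (ha : ¬ IsUnit a) {n : ℕ}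
    (hdvd : ∀ f : Fin n → H, (∀ i, ¬ IsUnit (f i)) → a ∣ ∏ i, f i)
    {k : ℕ} (hk : k ∈ lengthSet H a) : k ≤ n := by
  by_contra hlt
  push_neg at hlt
  obtain ⟨l, hl, hlen, hprod⟩ := (mem_lengthSet_iff_list ha).mp hk
  have hnl : ∀ x ∈ l, ¬ IsUnit x := fun x hx => (hl x hx).not_isUnit
  have h1 : a ∣ (l.take n).prod := by
    apply dvd_listProd hdvd (fun x hx => hnl x (List.mem_of_mem_take hx))
    simp [le_of_lt (hlen ▸ hlt)]
  obtain ⟨d, hd⟩ := h1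
  have hsplit : a = a * d * (l.drop n).prod := by
    rw [← hd, ← List.prod_append, List.take_append_drop, hprod]
  have h1' : a * 1 = a * (d * (l.drop n).prod) := by
    rw [mul_one, ← mul_assoc]; exact hsplit
  have hone := (mul_left_cancel h1').symm
  have hunit : IsUnit ((l.drop n).prod) :=
    IsUnit.of_mul_eq_one d (by rw [mul_comm]; exact hone)
  have hne : l.drop n ≠ [] := by
    intro h
    have : (l.drop n).length = l.length - n := List.length_drop
    rw [h] at this
    simp at this
    omega
  obtain ⟨x, hx⟩ := List.exists_mem_of_ne_nil _ hne
  exact (hnl x (List.mem_of_mem_drop hx))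
    (isUnit_of_mem_of_isUnit_listProd _ hunit x hx)

lemma zero_not_mem_lengthSet {a : H} (ha : ¬ IsUnit a) : 0 ∉ lengthSet H a := by
  intro h
  obtain ⟨l, -, hlen, hprod⟩ := (mem_lengthSet_iff_list ha).mp h
  rw [List.length_eq_zero_iff.mp hlen] at hprod
  exact ha (hprod ▸ isUnit_one)

lemma mem_lengthSet_mul {x y : H} (hx : ¬ IsUnit x) (hy : ¬ IsUnit y) {k l : ℕ}
    (hk : k ∈ lengthSet H x) (hl : l ∈ lengthSet H y) :
    k + l ∈ lengthSet H (x * y) := by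
  have hxy : ¬ IsUnit (x * y) := fun h => hx (isUnit_of_mul_isUnit_left h)
  obtain ⟨lx, hlx, hlenx, hprodx⟩ := (mem_lengthSet_iff_list hx).mp hk
  obtain ⟨ly, hly, hleny, hprody⟩ := (mem_lengthSet_iff_list hy).mp hl
  refine (mem_lengthSet_iff_list hxy).mpr ⟨lx ++ ly, ?_, by simp [hlenx, hleny], ?_⟩
  · intro u hu
    rcases List.mem_append.mp hu with h | h
    exacts [hlx u h, hly u h]
  · rw [List.prod_append, hprodx, hprody]

lemma mem_lengthSet_mul_unit {x u : H} (hx : ¬ IsUnit x) (hu : IsUnit u) {k : ℕ}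
    (hk : k ∈ lengthSet H x) : k ∈ lengthSet H (x * u) := by
  have hxu : ¬ IsUnit (x * u) := fun h => hx (isUnit_of_mul_isUnit_left h)
  obtain ⟨l, hl, hlen, hprod⟩ := (mem_lengthSet_iff_list hx).mp hk
  match l, hl, hlen, hprod with
  | [], _, hlen, hprod => exact absurd (hprod ▸ isUnit_one) hx
  | (z :: t), hl, hlen, hprod =>
      refine (mem_lengthSet_iff_list hxu).mpr ⟨(z * u) :: t, ?_, by simpa using hlen, ?_⟩
      · intro w hw
        rcases List.mem_cons.mp hw with rfl | hw
        · exact (irreducible_mul_isUnit hu).mpr (hl z (List.mem_cons_self))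
        · exact hl w (List.mem_cons_of_mem _ hw)
      · rw [List.prod_cons] at hprod ⊢
        rw [hprod]
        exact (mul_right_comm z u t.prod).symm ▸ (mul_right_comm z t.prod u).symm

lemma mem_lengthSet_pow {b : H} (hb : ¬ IsUnit b) {k : ℕ} (hk : k ∈ lengthSet H b) :
    ∀ t : ℕ, 0 < t → t * k ∈ lengthSet H (b ^ t) := by
  intro t
  induction t with
  | zero => omega
  | succ t ih =>
      intro _
      rcases Nat.eq_zero_or_pos t with rfl | ht
      · simpa [pow_one] using hk
      · have h := mem_lengthSet_mul (x := b ^ t) (y := b)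
          (fun h => hb ((isUnit_pow_iff (Nat.pos_iff_ne_zero.mp ht)).mp h)) hb (ih ht) hk
        rw [← pow_succ] at h
        convert h using 1
        ring

lemma frac_mono {T t M m c : ℝ} (hc : 0 ≤ c) (hM : 0 ≤ M) (hTt : T ≤ t)
    (hT : 0 < T * m + c) (ht2 : 0 < t * m + c) :
    T * M / (T * m + c) ≤ t * M / (t * m + c) := by
  rw [div_le_div_iff₀ hT ht2]
  nlinarith [mul_le_mul_of_nonneg_right hTt hM, mul_le_mul_of_nonneg_right hTt (mul_nonneg hM hc)]

end Aux

/-- If `H` is strongly primary and `(a_k)` is a sequence in `H` with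
`max L(a_k) → ∞`, then `liminf_k ρ(a_k) ≥ ρ(H)`. -/
theorem statement19 (H : Type*) [CancelCommMonoid H] (hsp : StronglyPrimary H)
    (a : ℕ → H) (hmax : Tendsto (fun k : ℕ => sSup (lengthSet H (a k))) atTop atTop) :
    monoidElasticity H ≤ Filter.liminf (fun k : ℕ => ((elasticity H (a k) : ℝ) : EReal)) atTop := by
  classical
  have hsp2 := hsp.2
  have liminf_ge : ∀ r : EReal,
      (∀ᶠ k in atTop, r ≤ ((elasticity H (a k) : ℝ) : EReal)) →
      r ≤ Filter.liminf (fun k : ℕ => ((elasticity H (a k) : ℝ) : EReal)) atTop := by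
    intro r hr
    rw [Filter.liminf_eq]
    exact le_sSup hr
  -- elasticity is always at least 1
  have hone : ∀ x : H, (1 : ℝ) ≤ elasticity H x := by
    intro x
    by_cases hx : IsUnit x
    · simp [elasticity, hx]
    · obtain ⟨l, hl, hprod⟩ := exists_atomic_fact hsp hx
      have hne : (lengthSet H x).Nonempty :=
        ⟨l.length, (mem_lengthSet_iff_list hx).mpr ⟨l, hl, rfl, hprod⟩⟩
      obtain ⟨n, hn, hdvd⟩ := hsp2 x hx
      have hbdd : BddAbove (lengthSet H x) := ⟨n, fun k hk => lengthSet_le_const hx hdvd hk⟩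
      have hm : sInf (lengthSet H x) ∈ lengthSet H x := Nat.sInf_mem hne
      have hM : sInf (lengthSet H x) ≤ sSup (lengthSet H x) := le_csSup hbdd hm
      have h0 : sInf (lengthSet H x) ≠ 0 := fun h => zero_not_mem_lengthSet hx (h ▸ hm)
      rw [elasticity, if_neg hx, le_div_iff₀ (by exact_mod_cast Nat.pos_of_ne_zero h0), one_mul]
      exact_mod_cast hM
  rw [monoidElasticity]
  apply iSup_le
  intro b
  by_cases hb : IsUnit b
  · have : elasticity H b = 1 := by simp [elasticity, hb]
    rw [this]
    exact liminf_ge _ (Eventually.of_forall fun k => EReal.coe_le_coe_iff.mpr (hone (a k)))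
  · obtain ⟨n, hnpos, hdvd⟩ := hsp2 b hb
    obtain ⟨lb, hlb, hlbprod⟩ := exists_atomic_fact hsp hb
    have hbne : (lengthSet H b).Nonempty :=
      ⟨lb.length, (mem_lengthSet_iff_list hb).mpr ⟨lb, hlb, rfl, hlbprod⟩⟩
    have hbbdd : BddAbove (lengthSet H b) := ⟨n, fun k hk => lengthSet_le_const hb hdvd hk⟩
    set M := sSup (lengthSet H b) with hMdef
    set m := sInf (lengthSet H b) with hmdef
    have hmmem : m ∈ lengthSet H b := Nat.sInf_mem hbne
    have hMmem : M ∈ lengthSet H b := Nat.sSup_mem hbne hbbdd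
    have hmM : m ≤ M := le_csSup hbbdd hmmem
    have hm1 : 1 ≤ m := Nat.pos_of_ne_zero (fun h => zero_not_mem_lengthSet hb (h ▸ hmmem))
    have helb : elasticity H b = (M : ℝ) / (m : ℝ) := by rw [elasticity, if_neg hb]
    apply le_of_forall_lt
    intro c hc
    obtain ⟨r, hcr, hrb⟩ := EReal.exists_between_coe_real hc
    have hr : r < (M : ℝ) / (m : ℝ) := by
      rw [helb] at hrb
      exact_mod_cast hrb
    have hmpos : (0 : ℝ) < (m : ℝ) := by exact_mod_cast hm1
    have hMrm : 0 < (M : ℝ) - r * (m : ℝ) := by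
      rw [lt_div_iff₀ hmpos] at hr; linarith
    obtain ⟨T₀, hT₀⟩ := exists_nat_gt (r * ((n : ℝ) - 1) / ((M : ℝ) - r * (m : ℝ)))
    set T := max T₀ 1 with hTdef
    have hT1 : 1 ≤ T := le_max_right _ _
    have hTT₀ : (T₀ : ℝ) ≤ (T : ℝ) := by exact_mod_cast le_max_left _ _
    have hn1 : (1 : ℝ) ≤ (n : ℝ) := by exact_mod_cast hnpos
    have hTm_pos : (0 : ℝ) < (T : ℝ) * (m : ℝ) + ((n : ℝ) - 1) := by
      have : (1 : ℝ) ≤ (T : ℝ) := by exact_mod_cast hT1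
      nlinarith
    have hrc : r * ((n : ℝ) - 1) < (T₀ : ℝ) * ((M : ℝ) - r * (m : ℝ)) :=
      (div_lt_iff₀ hMrm).mp hT₀
    have hrT : r ≤ ((T : ℝ) * M) / ((T : ℝ) * m + ((n : ℝ) - 1)) := by
      rw [le_div_iff₀ hTm_pos]
      nlinarith [mul_le_mul_of_nonneg_right hTT₀ hMrm.le]
    have hev : ∀ᶠ k in atTop, n * (T + 1) ≤ sSup (lengthSet H (a k)) :=
      hmax.eventually_ge_atTop _
    refine lt_of_lt_of_le hcr (liminf_ge _ ?_)
    filter_upwards [hev] with k hk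
    refine EReal.coe_le_coe_iff.mpr ?_
    -- the element `a k`
    have hAunit : ¬ IsUnit (a k) := by
      intro h
      have h0 : lengthSet H (a k) = {0} := by simp [lengthSet, h]
      rw [h0] at hk
      simp [csSup_singleton] at hk
      nlinarith
    obtain ⟨nA, hnApos, hdvdA⟩ := hsp2 (a k) hAunit
    obtain ⟨lA, hlA, hlAprod⟩ := exists_atomic_fact hsp hAunit
    have hAne : (lengthSet H (a k)).Nonempty :=
      ⟨lA.length, (mem_lengthSet_iff_list hAunit).mpr ⟨lA, hlA, rfl, hlAprod⟩⟩
    have hAbdd : BddAbove (lengthSet H (a k)) :=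
      ⟨nA, fun k' hk' => lengthSet_le_const hAunit hdvdA hk'⟩
    set MA := sSup (lengthSet H (a k)) with hMAdef
    set mA := sInf (lengthSet H (a k)) with hmAdef
    have hMAmem : MA ∈ lengthSet H (a k) := Nat.sSup_mem hAne hAbdd
    have hmAmem : mA ∈ lengthSet H (a k) := Nat.sInf_mem hAne
    have hmA1 : 1 ≤ mA :=
      Nat.pos_of_ne_zero (fun h => zero_not_mem_lengthSet hAunit (h ▸ hmAmem))
    have hbt_nonunit : ∀ t : ℕ, 0 < t → ¬ IsUnit (b ^ t) := fun t ht h =>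
      hb ((isUnit_pow_iff (Nat.pos_iff_ne_zero.mp ht)).mp h)
    -- membership transfer from a factorization `a k = b ^ t * c`
    have hmem_of_dvd : ∀ (t : ℕ), 0 < t → ∀ (c' : H) (kb : ℕ),
        kb ∈ lengthSet H (b ^ t) → a k = b ^ t * c' →
        (IsUnit c' → kb ∈ lengthSet H (a k)) ∧
        (¬ IsUnit c' → ∀ kc ∈ lengthSet H c', kb + kc ∈ lengthSet H (a k)) := by
      intro t ht c' kb hkb hA
      constructor
      · intro hcu; rw [hA]; exact mem_lengthSet_mul_unit (hbt_nonunit t ht) hcu hkb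
      · intro hcu kc hkc; rw [hA]; exact mem_lengthSet_mul (hbt_nonunit t ht) hcu hkb hkc
    -- the set of exponents t with b ^ t ∣ a k
    set S : Set ℕ := {t | b ^ t ∣ a k} with hSdef
    have hS0 : 0 ∈ S := by simp [hSdef]
    have hSbdd : BddAbove S := by
      refine ⟨nA, ?_⟩
      rintro t ⟨c', hc'⟩
      rcases Nat.eq_zero_or_pos t with rfl | ht
      · exact Nat.zero_le _
      · have hkb : t * m ∈ lengthSet H (b ^ t) := mem_lengthSet_pow hb hmmem t ht
        have htm : t ≤ t * m := Nat.le_mul_of_pos_right t hm1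
        by_cases hcu : IsUnit c'
        · have hmem := (hmem_of_dvd t ht c' _ hkb hc').1 hcu
          exact le_trans htm (lengthSet_le_const hAunit hdvdA hmem)
        · obtain ⟨lc, hlc, hlcprod⟩ := exists_atomic_fact hsp hcu
          have hkc : lc.length ∈ lengthSet H c' :=
            (mem_lengthSet_iff_list hcu).mpr ⟨lc, hlc, rfl, hlcprod⟩
          have hmem := (hmem_of_dvd t ht c' _ hkb hc').2 hcu _ hkc
          exact le_trans (le_trans htm (Nat.le_add_right _ _))
            (lengthSet_le_const hAunit hdvdA hmem)
    set t := sSup S with htdef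
    have htmem : b ^ t ∣ a k := Nat.sSup_mem ⟨0, hS0⟩ hSbdd
    have htmax : ¬ b ^ (t + 1) ∣ a k := by
      intro h
      have : t + 1 ≤ t := le_csSup hSbdd h
      omega
    -- t is at least T + 1
    have hdivmem : MA / n ∈ S := by
      obtain ⟨l, hl, hlen, hprod⟩ := (mem_lengthSet_iff_list hAunit).mp hMAmem
      have : b ^ (MA / n) ∣ l.prod := by
        apply pow_dvd_listProd hdvd _ _ (fun x hx => (hl x hx).not_isUnit)
        rw [hlen]
        exact Nat.div_mul_le_self MA n
      rw [hSdef]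
      simpa [← hprod] using this
    have hT_le_t : T + 1 ≤ t := by
      have h1 : T + 1 ≤ MA / n := by
        rw [Nat.le_div_iff_mul_le hnpos]
        calc (T + 1) * n = n * (T + 1) := mul_comm _ _
        _ ≤ MA := hk
      exact le_trans h1 (le_csSup hSbdd hdivmem)
    have ht1 : 0 < t := by omega
    obtain ⟨c', hc'⟩ := htmem
    -- upper bound for mA and lower bound for MA
    have hkbM : t * M ∈ lengthSet H (b ^ t) := mem_lengthSet_pow hb hMmem t ht1
    have hkbm : t * m ∈ lengthSet H (b ^ t) := mem_lengthSet_pow hb hmmem t ht1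
    have hMA_ge : t * M ≤ MA := by
      by_cases hcu : IsUnit c'
      · exact le_csSup hAbdd ((hmem_of_dvd t ht1 c' _ hkbM hc').1 hcu)
      · obtain ⟨lc, hlc, hlcprod⟩ := exists_atomic_fact hsp hcu
        have hkc : lc.length ∈ lengthSet H c' :=
          (mem_lengthSet_iff_list hcu).mpr ⟨lc, hlc, rfl, hlcprod⟩
        exact le_trans (Nat.le_add_right _ _)
          (le_csSup hAbdd ((hmem_of_dvd t ht1 c' _ hkbM hc').2 hcu _ hkc))
    have hmA_le : mA ≤ t * m + (n - 1) := by
      by_cases hcu : IsUnit c'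
      · exact le_trans (Nat.sInf_le ((hmem_of_dvd t ht1 c' _ hkbm hc').1 hcu))
          (Nat.le_add_right _ _)
      · have hcne : (lengthSet H c').Nonempty := by
          obtain ⟨lc, hlc, hlcprod⟩ := exists_atomic_fact hsp hcu
          exact ⟨lc.length, (mem_lengthSet_iff_list hcu).mpr ⟨lc, hlc, rfl, hlcprod⟩⟩
        have hcmem : sInf (lengthSet H c') ∈ lengthSet H c' := Nat.sInf_mem hcne
        have hlt : sInf (lengthSet H c') < n := by
          by_contra hge
          push_neg at hge
          obtain ⟨lc, hlc, hlenc, hprodc⟩ := (mem_lengthSet_iff_list hcu).mp hcmem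
          have hbc : b ∣ c' := by
            rw [hprodc]
            exact dvd_listProd hdvd (fun x hx => (hlc x hx).not_isUnit) (by omega)
          obtain ⟨c'', hc''⟩ := hbc
          apply htmax
          exact ⟨c'', by rw [hc', hc'', pow_succ, mul_assoc]⟩
        have h2 := Nat.sInf_le ((hmem_of_dvd t ht1 c' _ hkbm hc').2 hcu _ hcmem)
        omega
    -- real arithmetic conclusion
    rw [elasticity, if_neg hAunit]
    have hmApos : (0 : ℝ) < (mA : ℝ) := by exact_mod_cast hmA1
    have hcast : ((t * m + (n - 1) : ℕ) : ℝ) = (t : ℝ) * m + ((n : ℝ) - 1) := by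
      push_cast [Nat.cast_sub hnpos]
      ring
    have h1 : ((t : ℝ) * M) / ((t : ℝ) * m + ((n : ℝ) - 1)) ≤ (MA : ℝ) / (mA : ℝ) := by
      apply div_le_div₀ (by positivity) _ hmApos _
      · exact_mod_cast hMA_ge
      · rw [← hcast]; exact_mod_cast hmA_le
    have hTt : (T : ℝ) ≤ (t : ℝ) := by exact_mod_cast (by omega : T ≤ t)
    have htm_pos : (0 : ℝ) < (t : ℝ) * m + ((n : ℝ) - 1) := by
      have h1T : (1 : ℝ) ≤ (T : ℝ) := by exact_mod_cast hT1
      have h1m : (1 : ℝ) ≤ (m : ℝ) := by exact_mod_cast hm1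
      nlinarith
    have h2 : ((T : ℝ) * M) / ((T : ℝ) * m + ((n : ℝ) - 1)) ≤
        ((t : ℝ) * M) / ((t : ℝ) * m + ((n : ℝ) - 1)) :=
      frac_mono (by linarith) (by positivity) hTt hTm_pos htm_pos
    exact le_trans hrT (le_trans h2 h1)
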